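/- Let θ₁⁺, θ₂⁺, θ₁⁻, θ₂⁻ ∈ ℝ and let m₁, m₂, m₃, m₄ ∈ ℤ with m₁ ≠ 0 satisfy m₁·θ₁⁺ + m₂·θ₂⁺ + m₃·θ₁⁻ + m₄·θ₂⁻ = 0. Let f_p⁺, f_p⁻ : ℝ³ → ℝ be ℤ³-periodic (f_p^±(y + e) = f_p^±(y) for every y ∈ ℝ³ and every standard basis vector e of ℝ³). Define g⁺, g⁻ : ℝ⁴ → ℝ by g⁺(x, a, b, c) := f_p⁺(x, −m₂·a − m₃·b − m₄·c, m₁·a) and g⁻(x, a, b, c) := f_p⁻(x, m₁·b, m₁·c). Then: (i) g⁺ and g⁻ are ℤ⁴-periodic; and (ii) for every (x, z) ∈ ℝ² one has f_p⁺(x, θ₁⁺·z, θ₂⁺·z) = g⁺(x, θ₂⁺·z/m₁, θ₁⁻·z/m₁, θ₂⁻·z/m₁) and f_p⁻(x, θ₁⁻·z, θ₂⁻·z) = g⁻(x, θ₂⁺·z/m₁, θ₁⁻·z/m₁, θ₂⁻·z/m₁). -/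

import Mathlib

private lemma shift_int (F : ℝ → ℝ) (h : ∀ t, F (t + 1) = F t) :
    ∀ (n : ℤ) (t : ℝ), F (t + n) = F t := by
  intro n
  induction n using Int.induction_on with
  | zero => simp
  | succ k ih =>
      intro t
      have : (t : ℝ) + (((k : ℤ) + 1 : ℤ) : ℝ) = (t + ((k : ℤ) : ℝ)) + 1 := by
        push_cast; ring
      rw [this, h, ih]
  | pred k ih =>
      intro t
      have h2 : (t : ℝ) + ((-(k : ℤ) - 1 : ℤ) : ℝ) + 1 = t + ((-(k : ℤ) : ℤ) : ℝ) := by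
        push_cast; ring
      have h3 := h (t + ((-(k : ℤ) - 1 : ℤ) : ℝ))
      rw [h2] at h3
      rw [← h3]
      exact ih t


/-- Rationally dependent case of Section 7.2.3 of the paper: when the cut parameters
satisfy a nontrivial integer relation `m₁θ₁⁺ + m₂θ₂⁺ + m₃θ₁⁻ + m₄θ₂⁻ = 0` with
`m₁ ≠ 0`, the `ℤ³`-periodic functions `f_p±` can be represented through `ℤ⁴`-periodic
functions `g±` along the cut directions `(θ₂⁺/m₁, θ₁⁻/m₁, θ₂⁻/m₁)`. -/
theorem stmt_15
    (θ₁p θ₂p θ₁m θ₂m : ℝ)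
    (m₁ m₂ m₃ m₄ : ℤ) (hm₁ : m₁ ≠ 0)
    (hrel : (m₁ : ℝ) * θ₁p + (m₂ : ℝ) * θ₂p + (m₃ : ℝ) * θ₁m + (m₄ : ℝ) * θ₂m = 0)
    (fpP fpM : ℝ × ℝ × ℝ → ℝ)
    (hfpP : ∀ x z₁ z₂ : ℝ,
      fpP (x + 1, z₁, z₂) = fpP (x, z₁, z₂) ∧
      fpP (x, z₁ + 1, z₂) = fpP (x, z₁, z₂) ∧
      fpP (x, z₁, z₂ + 1) = fpP (x, z₁, z₂))
    (hfpM : ∀ x z₁ z₂ : ℝ,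
      fpM (x + 1, z₁, z₂) = fpM (x, z₁, z₂) ∧
      fpM (x, z₁ + 1, z₂) = fpM (x, z₁, z₂) ∧
      fpM (x, z₁, z₂ + 1) = fpM (x, z₁, z₂))
    (gP gM : ℝ × ℝ × ℝ × ℝ → ℝ)
    (hgP : ∀ x a b c : ℝ,
      gP (x, a, b, c) =
        fpP (x, -(m₂ : ℝ) * a - (m₃ : ℝ) * b - (m₄ : ℝ) * c, (m₁ : ℝ) * a))
    (hgM : ∀ x a b c : ℝ,
      gM (x, a, b, c) = fpM (x, (m₁ : ℝ) * b, (m₁ : ℝ) * c)) :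
    (∀ x a b c : ℝ,
      (gP (x + 1, a, b, c) = gP (x, a, b, c) ∧
       gP (x, a + 1, b, c) = gP (x, a, b, c) ∧
       gP (x, a, b + 1, c) = gP (x, a, b, c) ∧
       gP (x, a, b, c + 1) = gP (x, a, b, c)) ∧
      (gM (x + 1, a, b, c) = gM (x, a, b, c) ∧
       gM (x, a + 1, b, c) = gM (x, a, b, c) ∧
       gM (x, a, b + 1, c) = gM (x, a, b, c) ∧
       gM (x, a, b, c + 1) = gM (x, a, b, c))) ∧
    (∀ x z : ℝ,
      fpP (x, θ₁p * z, θ₂p * z)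
        = gP (x, θ₂p * z / (m₁ : ℝ), θ₁m * z / (m₁ : ℝ), θ₂m * z / (m₁ : ℝ)) ∧
      fpM (x, θ₁m * z, θ₂m * z)
        = gM (x, θ₂p * z / (m₁ : ℝ), θ₁m * z / (m₁ : ℝ), θ₂m * z / (m₁ : ℝ))) := by
  have hm : (m₁ : ℝ) ≠ 0 := Int.cast_ne_zero.mpr hm₁
  have pP2 : ∀ (x z₁ z₂ : ℝ) (n : ℤ), fpP (x, z₁ + n, z₂) = fpP (x, z₁, z₂) :=
    fun x z₁ z₂ n => shift_int (fun s => fpP (x, s, z₂)) (fun t => (hfpP x t z₂).2.1) n z₁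
  have pP3 : ∀ (x z₁ z₂ : ℝ) (n : ℤ), fpP (x, z₁, z₂ + n) = fpP (x, z₁, z₂) :=
    fun x z₁ z₂ n => shift_int (fun s => fpP (x, z₁, s)) (fun t => (hfpP x z₁ t).2.2) n z₂
  have pM2 : ∀ (x z₁ z₂ : ℝ) (n : ℤ), fpM (x, z₁ + n, z₂) = fpM (x, z₁, z₂) :=
    fun x z₁ z₂ n => shift_int (fun s => fpM (x, s, z₂)) (fun t => (hfpM x t z₂).2.1) n z₁
  have pM3 : ∀ (x z₁ z₂ : ℝ) (n : ℤ), fpM (x, z₁, z₂ + n) = fpM (x, z₁, z₂) :=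
    fun x z₁ z₂ n => shift_int (fun s => fpM (x, z₁, s)) (fun t => (hfpM x z₁ t).2.2) n z₂
  constructor
  · intro x a b c
    refine ⟨⟨?_, ?_, ?_, ?_⟩, ?_, ?_, ?_, ?_⟩
    · rw [hgP, hgP]; exact (hfpP x _ _).1
    · rw [hgP, hgP]
      have e1 : -(m₂ : ℝ) * (a + 1) - (m₃ : ℝ) * b - (m₄ : ℝ) * c
          = (-(m₂ : ℝ) * a - (m₃ : ℝ) * b - (m₄ : ℝ) * c) + ((-m₂ : ℤ) : ℝ) := by
        push_cast; ring
      have e2 : (m₁ : ℝ) * (a + 1) = (m₁ : ℝ) * a + ((m₁ : ℤ) : ℝ) := by push_cast; ring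
      rw [e1, e2, pP2, pP3]
    · rw [hgP, hgP]
      have e1 : -(m₂ : ℝ) * a - (m₃ : ℝ) * (b + 1) - (m₄ : ℝ) * c
          = (-(m₂ : ℝ) * a - (m₃ : ℝ) * b - (m₄ : ℝ) * c) + ((-m₃ : ℤ) : ℝ) := by
        push_cast; ring
      rw [e1, pP2]
    · rw [hgP, hgP]
      have e1 : -(m₂ : ℝ) * a - (m₃ : ℝ) * b - (m₄ : ℝ) * (c + 1)
          = (-(m₂ : ℝ) * a - (m₃ : ℝ) * b - (m₄ : ℝ) * c) + ((-m₄ : ℤ) : ℝ) := by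
        push_cast; ring
      rw [e1, pP2]
    · rw [hgM, hgM]; exact (hfpM x _ _).1
    · rw [hgM, hgM]
    · rw [hgM, hgM]
      have e1 : (m₁ : ℝ) * (b + 1) = (m₁ : ℝ) * b + ((m₁ : ℤ) : ℝ) := by push_cast; ring
      rw [e1, pM2]
    · rw [hgM, hgM]
      have e1 : (m₁ : ℝ) * (c + 1) = (m₁ : ℝ) * c + ((m₁ : ℤ) : ℝ) := by push_cast; ring
      rw [e1, pM3]
  · intro x z
    constructor
    · rw [hgP]
      have e1 : -(m₂ : ℝ) * (θ₂p * z / (m₁ : ℝ)) - (m₃ : ℝ) * (θ₁m * z / (m₁ : ℝ))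
          - (m₄ : ℝ) * (θ₂m * z / (m₁ : ℝ)) = θ₁p * z := by
        field_simp
        linear_combination (-z) * hrel
      have e2 : (m₁ : ℝ) * (θ₂p * z / (m₁ : ℝ)) = θ₂p * z := by field_simp
      rw [e1, e2]
    · rw [hgM]
      have e1 : (m₁ : ℝ) * (θ₁m * z / (m₁ : ℝ)) = θ₁m * z := by field_simp
      have e2 : (m₁ : ℝ) * (θ₂m * z / (m₁ : ℝ)) = θ₂m * z := by field_simp
      rw [e1, e2]
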